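/- Let m, r, k and n₁,…,n_k, q₁,…,q_k be natural numbers, and set h = 3m + n₁ + … + n_k. Let π₁ : ℝ^h → ℝ^{2m} be the projection onto the first 2m coordinates, π₂ : ℝ^h → ℝ^{2m} the projection onto the coordinates m+1,…,3m, and π₃ : ℝ^h → ℝ^{2m} the projection onto the coordinates 1,…,m, 2m+1,…,3m. For j = 1,…,k let p_j : ℝ^h → ℝ^{n_j} be the projection onto the coordinates 3m + n₁ + … + n_{j−1} + 1, …, 3m + n₁ + … + n_j. If V is a linear subspace of ℝ^h with dim(πᵢ(V)) ≤ 2r for i = 1,2,3 and dim(p_j(V)) ≤ q_j for j = 1,…,k, then dim(V) ≤ 3r + q₁ + … + q_k. -/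

import Mathlib

open Matrix

/-- The partial sum of the block sizes strictly before `j`, plus `x < n j`, is smaller
than the total sum. -/
lemma offset_lt_sum {k : ℕ} (n : Fin k → ℕ) (j : Fin k) (x : ℕ) (hx : x < n j) :
    (∑ i ∈ Finset.univ.filter (fun i : Fin k => i < j), n i) + x < ∑ i, n i := by
  have hsub : (Finset.univ.filter (fun i : Fin k => i < j)) ⊆ Finset.univ.erase j := by
    intro i hi
    simp only [Finset.mem_filter, Finset.mem_univ, true_and] at hi
    exact Finset.mem_erase.2 ⟨ne_of_lt hi, Finset.mem_univ i⟩
  have h1 : (∑ i ∈ Finset.univ.filter (fun i : Fin k => i < j), n i)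
      ≤ ∑ i ∈ Finset.univ.erase j, n i := Finset.sum_le_sum_of_subset hsub
  have h2 : n j + ∑ i ∈ Finset.univ.erase j, n i = ∑ i, n i :=
    Finset.add_sum_erase _ _ (Finset.mem_univ j)
  omega

lemma finrank_map_add_inf_ker {K M M' : Type*} [Field K] [AddCommGroup M] [Module K M]
    [AddCommGroup M'] [Module K M'] [FiniteDimensional K M]
    (W : Submodule K M) (f : M →ₗ[K] M') :
    Module.finrank K W
      = Module.finrank K (W.map f)
        + Module.finrank K (W ⊓ LinearMap.ker f : Submodule K M) := by
  have h := LinearMap.finrank_range_add_finrank_ker (f.domRestrict W)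
  rw [LinearMap.range_domRestrict, LinearMap.ker_domRestrict] at h
  rw [← h]
  congr 1
  have : (LinearMap.ker f).comap W.subtype
      = ((W ⊓ LinearMap.ker f : Submodule K M)).comap W.subtype := by
    rw [Submodule.comap_inf]
    simp [Submodule.comap_subtype_self]
  rw [this]
  exact (Submodule.comapSubtypeEquivOfLe inf_le_left).finrank_eq

/-- If two maps jointly separate points of `W`, the dimension of `W` is at most the
sum of the dimensions of its two images. -/
lemma finrank_le_two_map {K M A B : Type*} [Field K] [AddCommGroup M] [Module K M]
    [AddCommGroup A] [Module K A] [AddCommGroup B] [Module K B] [FiniteDimensional K M]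
    (W : Submodule K M) (f : M →ₗ[K] A) (g : M →ₗ[K] B)
    (h : ∀ v ∈ W, f v = 0 → g v = 0 → v = 0) :
    Module.finrank K W ≤ Module.finrank K (W.map f) + Module.finrank K (W.map g) := by
  rw [finrank_map_add_inf_ker W f]
  have h2 := finrank_map_add_inf_ker (W ⊓ LinearMap.ker f) g
  have h3 : (W ⊓ LinearMap.ker f) ⊓ LinearMap.ker g = (⊥ : Submodule K M) := by
    rw [eq_bot_iff]
    rintro v ⟨⟨hvW, hvf⟩, hvg⟩
    exact h v hvW hvf hvg
  rw [h3] at h2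
  simp only [finrank_bot, add_zero] at h2
  have h4 : Module.finrank K ((W ⊓ LinearMap.ker f).map g) ≤ Module.finrank K (W.map g) :=
    Submodule.finrank_mono (Submodule.map_mono inf_le_left)
  omega

lemma finrank_le_sum_map {K M : Type*} [Field K] [AddCommGroup M] [Module K M]
    [FiniteDimensional K M] {ι : Type*} [DecidableEq ι] (s : Finset ι)
    {P : ι → Type*} [∀ i, AddCommGroup (P i)] [∀ i, Module K (P i)]
    (f : ∀ i, M →ₗ[K] P i) (W : Submodule K M)
    (h : ∀ v ∈ W, (∀ i ∈ s, f i v = 0) → v = 0) :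
    Module.finrank K W ≤ ∑ i ∈ s, Module.finrank K (W.map (f i)) := by
  induction s using Finset.induction_on generalizing W with
  | empty =>
    have : W = ⊥ := by
      rw [eq_bot_iff]
      intro v hv
      simpa using h v hv (by simp)
    simp [this]
  | insert a s ha ih =>
    rw [Finset.sum_insert ha, finrank_map_add_inf_ker W (f a)]
    have step := ih (W ⊓ LinearMap.ker (f a)) (fun v hv hz => by
      refine h v hv.1 (fun i hi => ?_)
      rcases Finset.mem_insert.1 hi with rfl | hi
      · exact hv.2
      · exact hz i hi)
    have mono : ∀ i ∈ s, Module.finrank K ((W ⊓ LinearMap.ker (f a) : Submodule K M).map (f i))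
        ≤ Module.finrank K (W.map (f i)) := fun i _ =>
      Submodule.finrank_mono (Submodule.map_mono inf_le_left)
    have := Finset.sum_le_sum mono
    omega

lemma nat_block (N : ℕ → ℕ) : ∀ k c, c < ∑ i ∈ Finset.range k, N i →
    ∃ j, j < k ∧ ∃ x, x < N j ∧ c = (∑ i ∈ Finset.range j, N i) + x := by
  intro k
  induction k with
  | zero => simp
  | succ k ih =>
    intro c hc
    rw [Finset.sum_range_succ] at hc
    by_cases h : c < ∑ i ∈ Finset.range k, N i
    · obtain ⟨j, hj, x, hx, he⟩ := ih c h
      exact ⟨j, by omega, x, hx, he⟩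
    · exact ⟨k, by omega, c - ∑ i ∈ Finset.range k, N i, by omega, by omega⟩

lemma filter_sum_eq {k : ℕ} (n : Fin k → ℕ) (j : Fin k) :
    (∑ i ∈ Finset.univ.filter (fun i : Fin k => i < j), n i)
      = ∑ c ∈ Finset.range (j : ℕ), (if h : c < k then n ⟨c, h⟩ else 0) := by
  rw [Finset.sum_filter]
  have h1 : ∑ i : Fin k, (if i < j then n i else 0)
      = ∑ c ∈ Finset.range k, (if h : c < k then (if c < (j:ℕ) then n ⟨c,h⟩ else 0) else 0) := by
    rw [← Fin.sum_univ_eq_sum_range]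
    refine Finset.sum_congr rfl (fun i _ => ?_)
    have hik : (i:ℕ) < k := i.2
    rw [dif_pos hik]
    have : (⟨(i:ℕ), hik⟩ : Fin k) = i := rfl
    rw [this]
    rfl
  rw [h1]
  rw [← Finset.sum_subset (Finset.range_mono j.2.le)
    (fun c _ hc => by simp at hc; simp; intro h hc'; omega)]
  refine Finset.sum_congr rfl (fun c hc => ?_)
  simp at hc
  have : c < k := lt_of_lt_of_le hc j.2.le
  simp [this, hc]

lemma univ_sum_eq {k : ℕ} (n : Fin k → ℕ) :
    (∑ j, n j) = ∑ c ∈ Finset.range k, (if h : c < k then n ⟨c, h⟩ else 0) := by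
  rw [← Fin.sum_univ_eq_sum_range]
  refine Finset.sum_congr rfl (fun i _ => ?_)
  have hik : (i:ℕ) < k := i.2
  rw [dif_pos hik]

theorem stmt_6 (m r k : ℕ) (n q : Fin k → ℕ)
    (V : Submodule ℝ (Fin (3 * m + ∑ j, n j) → ℝ))
    (h1 : Module.finrank ℝ (V.map (LinearMap.funLeft ℝ ℝ
      (fun i : Fin (2 * m) =>
        (⟨(i : ℕ), by have := i.2; omega⟩ : Fin (3 * m + ∑ j, n j))))) ≤ 2 * r)
    (h2 : Module.finrank ℝ (V.map (LinearMap.funLeft ℝ ℝ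
      (fun i : Fin (2 * m) =>
        (⟨(i : ℕ) + m, by have := i.2; omega⟩ : Fin (3 * m + ∑ j, n j))))) ≤ 2 * r)
    (h3 : Module.finrank ℝ (V.map (LinearMap.funLeft ℝ ℝ
      (fun i : Fin (2 * m) =>
        if (i : ℕ) < m then (⟨(i : ℕ), by have := i.2; omega⟩ : Fin (3 * m + ∑ j, n j))
        else (⟨(i : ℕ) + m, by have := i.2; omega⟩ : Fin (3 * m + ∑ j, n j))))) ≤ 2 * r)
    (hp : ∀ j : Fin k, Module.finrank ℝ (V.map (LinearMap.funLeft ℝ ℝ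
      (fun x : Fin (n j) =>
        (⟨3 * m + (∑ i ∈ Finset.univ.filter (fun i : Fin k => i < j), n i) + (x : ℕ),
          by have := offset_lt_sum n j x x.2; omega⟩ : Fin (3 * m + ∑ j, n j))))) ≤ q j) :
    Module.finrank ℝ V ≤ 3 * r + ∑ j, q j := by
  classical
  -- embeddings
  let inc3 : Fin (3 * m) → Fin (3 * m + ∑ j, n j) := fun i => ⟨(i : ℕ), by have := i.2; omega⟩
  let π3 : (Fin (3 * m + ∑ j, n j) → ℝ) →ₗ[ℝ] (Fin (3 * m) → ℝ) := LinearMap.funLeft ℝ ℝ inc3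
  let P : Submodule ℝ (Fin (3 * m) → ℝ) := V.map π3
  let eX : Fin m → Fin (3 * m) := fun i => ⟨(i : ℕ), by have := i.2; omega⟩
  let eXY : Fin (2 * m) → Fin (3 * m) := fun i => ⟨(i : ℕ), by have := i.2; omega⟩
  let eYZ : Fin (2 * m) → Fin (3 * m) := fun i => ⟨(i : ℕ) + m, by have := i.2; omega⟩
  let eXZ : Fin (2 * m) → Fin (3 * m) := fun i =>
    if (i : ℕ) < m then ⟨(i : ℕ), by have := i.2; omega⟩
    else ⟨(i : ℕ) + m, by have := i.2; omega⟩
  let es : Fin m → Fin (2 * m) := fun i => ⟨(i : ℕ), by have := i.2; omega⟩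
  let ρX := LinearMap.funLeft ℝ ℝ eX
  let ρXY := LinearMap.funLeft ℝ ℝ eXY
  let ρYZ := LinearMap.funLeft ℝ ℝ eYZ
  let ρXZ := LinearMap.funLeft ℝ ℝ eXZ
  let σ := LinearMap.funLeft ℝ ℝ es
  -- translation principle
  have key : ∀ {d : ℕ} (e : Fin d → Fin (3 * m)) (e' : Fin d → Fin (3 * m + ∑ j, n j)),
      (∀ i, e' i = inc3 (e i)) →
      P.map (LinearMap.funLeft ℝ ℝ e) = V.map (LinearMap.funLeft ℝ ℝ e') := by
    intro d e e' he
    have : e' = inc3 ∘ e := funext he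
    rw [this, LinearMap.funLeft_comp, Submodule.map_comp]
  have hXY : Module.finrank ℝ (P.map ρXY) ≤ 2 * r := by
    rw [key eXY _ (fun i => rfl)]; exact h1
  have hYZ : Module.finrank ℝ (P.map ρYZ) ≤ 2 * r := by
    rw [key eYZ _ (fun i => rfl)]; exact h2
  have hXZ : Module.finrank ℝ (P.map ρXZ) ≤ 2 * r := by
    rw [key eXZ (fun i : Fin (2 * m) =>
        if (i : ℕ) < m then (⟨(i : ℕ), by have := i.2; omega⟩ : Fin (3 * m + ∑ j, n j))
        else (⟨(i : ℕ) + m, by have := i.2; omega⟩ : Fin (3 * m + ∑ j, n j))) (fun i => by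
      by_cases hi : (i : ℕ) < m
      · simp only [eXZ, inc3, hi, if_true]
      · simp only [eXZ, inc3, hi, if_false])]
    exact h3
  -- Step C: finrank P ≤ 3 r
  -- B1 : finrank P ≤ f(X) + f(YZ)
  have B1 : Module.finrank ℝ P
      ≤ Module.finrank ℝ (P.map ρX) + Module.finrank ℝ (P.map ρYZ) := by
    refine finrank_le_two_map P ρX ρYZ (fun v _ hf hg => ?_)
    funext t
    by_cases ht : (t : ℕ) < m
    · have := congrFun hf ⟨(t : ℕ), ht⟩
      simpa [ρX, LinearMap.funLeft_apply, eX] using this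
    · have htm : (t : ℕ) - m < 2 * m := by have := t.2; omega
      have := congrFun hg ⟨(t : ℕ) - m, htm⟩
      have he : eYZ ⟨(t : ℕ) - m, htm⟩ = t := by
        apply Fin.ext; simp [eYZ]; omega
      simpa [ρYZ, LinearMap.funLeft_apply, he] using this
  -- B2 : finrank P + f(X) ≤ f(XY) + f(XZ)
  have hcomp : σ ∘ₗ ρXZ = ρX := by
    show LinearMap.funLeft ℝ ℝ es ∘ₗ LinearMap.funLeft ℝ ℝ eXZ = LinearMap.funLeft ℝ ℝ eX
    rw [← LinearMap.funLeft_comp]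
    congr 1
    funext i
    have him : (i : ℕ) < m := i.2
    simp only [Function.comp, eXZ, es, him, if_true, eX]
  have d1 : Module.finrank ℝ P
      = Module.finrank ℝ (P.map ρXY)
        + Module.finrank ℝ (P ⊓ LinearMap.ker ρXY : Submodule ℝ (Fin (3*m) → ℝ)) :=
    finrank_map_add_inf_ker P ρXY
  have d2 : Module.finrank ℝ (P.map ρXZ)
      = Module.finrank ℝ (P.map ρX)
        + Module.finrank ℝ ((P.map ρXZ) ⊓ LinearMap.ker σ : Submodule ℝ (Fin (2*m) → ℝ)) := by
    have e3 : (P.map ρXZ).map σ = P.map ρX := by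
      rw [← hcomp]; exact (Submodule.map_comp ρXZ σ P).symm
    have := finrank_map_add_inf_ker (P.map ρXZ) σ
    rw [e3] at this
    exact this
  have d4 : Module.finrank ℝ (P ⊓ LinearMap.ker ρXY : Submodule ℝ (Fin (3*m) → ℝ))
      = Module.finrank ℝ ((P ⊓ LinearMap.ker ρXY : Submodule ℝ (Fin (3*m) → ℝ)).map ρXZ) := by
    have hbot : (P ⊓ LinearMap.ker ρXY) ⊓ LinearMap.ker ρXZ
        = (⊥ : Submodule ℝ (Fin (3*m) → ℝ)) := by
      rw [eq_bot_iff]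
      rintro v ⟨⟨_, hvXY⟩, hvXZ⟩
      replace hvXY : ρXY v = 0 := hvXY
      replace hvXZ : ρXZ v = 0 := hvXZ
      have hz : v = 0 := by
        funext t
        by_cases ht : (t : ℕ) < 2 * m
        · have := congrFun hvXY ⟨(t : ℕ), ht⟩
          simpa [ρXY, LinearMap.funLeft_apply, eXY] using this
        · have htm : (t : ℕ) - m < 2 * m := by have := t.2; omega
          have := congrFun hvXZ ⟨(t : ℕ) - m, htm⟩
          have hnm : ¬ ((t : ℕ) - m < m) := by omega
          have he : eXZ ⟨(t : ℕ) - m, htm⟩ = t := by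
            apply Fin.ext; simp [eXZ, hnm]; omega
          simpa [ρXZ, LinearMap.funLeft_apply, he] using this
      simp [hz]
    have := finrank_map_add_inf_ker
      (P ⊓ LinearMap.ker ρXY : Submodule ℝ (Fin (3*m) → ℝ)) ρXZ
    rw [hbot] at this
    simpa using this
  have d5 : (P ⊓ LinearMap.ker ρXY : Submodule ℝ (Fin (3*m) → ℝ)).map ρXZ
      ≤ (P.map ρXZ) ⊓ LinearMap.ker σ := by
    refine le_inf (Submodule.map_mono inf_le_left) ?_
    rintro w hw
    obtain ⟨v, hv, rfl⟩ := hw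
    have hvXY : ρXY v = 0 := hv.2
    show σ (ρXZ v) = 0
    funext i
    have him : (i : ℕ) < m := i.2
    have him2 : (i : ℕ) < 2 * m := by omega
    have he : eXZ (es i) = eXY ⟨(i : ℕ), him2⟩ := by
      apply Fin.ext; simp [eXZ, es, eXY, him]
    have := congrFun hvXY ⟨(i : ℕ), him2⟩
    simp only [σ, ρXZ, ρXY, LinearMap.funLeft_apply, Pi.zero_apply] at this ⊢
    rw [he]
    exact this
  have h5 : Module.finrank ℝ ((P ⊓ LinearMap.ker ρXY : Submodule ℝ (Fin (3*m) → ℝ)).map ρXZ)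
      ≤ Module.finrank ℝ ((P.map ρXZ) ⊓ LinearMap.ker σ : Submodule ℝ (Fin (2*m) → ℝ)) :=
    Submodule.finrank_mono d5
  have B2 : Module.finrank ℝ P + Module.finrank ℝ (P.map ρX)
      ≤ Module.finrank ℝ (P.map ρXY) + Module.finrank ℝ (P.map ρXZ) := by
    omega
  have hP3r : Module.finrank ℝ P ≤ 3 * r := by omega
  -- Step A + B : the block part
  have dV : Module.finrank ℝ V
      = Module.finrank ℝ P
        + Module.finrank ℝ (V ⊓ LinearMap.ker π3 : Submodule ℝ (Fin (3 * m + ∑ j, n j) → ℝ)) :=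
    finrank_map_add_inf_ker V π3
  let pj : ∀ j : Fin k, (Fin (3 * m + ∑ j, n j) → ℝ) →ₗ[ℝ] (Fin (n j) → ℝ) := fun j =>
    LinearMap.funLeft ℝ ℝ (fun x : Fin (n j) =>
      (⟨3 * m + (∑ i ∈ Finset.univ.filter (fun i : Fin k => i < j), n i) + (x : ℕ),
        by have := offset_lt_sum n j x x.2; omega⟩ : Fin (3 * m + ∑ j, n j)))
  have hblocks : Module.finrank ℝ (V ⊓ LinearMap.ker π3 : Submodule ℝ (Fin (3 * m + ∑ j, n j) → ℝ))
      ≤ ∑ j, q j := by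
    have step := finrank_le_sum_map Finset.univ pj (V ⊓ LinearMap.ker π3) ?_
    · refine le_trans step (Finset.sum_le_sum (fun j _ => ?_))
      exact le_trans (Submodule.finrank_mono (Submodule.map_mono inf_le_left)) (hp j)
    · rintro v ⟨_, hvker⟩ hz
      replace hvker : π3 v = 0 := hvker
      funext t
      by_cases ht : (t : ℕ) < 3 * m
      · have := congrFun hvker ⟨(t : ℕ), ht⟩
        have he : inc3 ⟨(t : ℕ), ht⟩ = t := by apply Fin.ext; rfl
        simpa [π3, LinearMap.funLeft_apply, he] using this
      · obtain ⟨j', hjk, x, hx, he⟩ := nat_block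
            (fun c => if h : c < k then n ⟨c, h⟩ else 0) k ((t : ℕ) - 3 * m)
            (by rw [← univ_sum_eq]; have := t.2; omega)
        have hx' : x < n ⟨j', hjk⟩ := by simpa [hjk] using hx
        have hzj := hz ⟨j', hjk⟩ (Finset.mem_univ _)
        have := congrFun hzj ⟨x, hx'⟩
        have hidx : (⟨3 * m
            + (∑ i ∈ Finset.univ.filter (fun i : Fin k => i < (⟨j', hjk⟩ : Fin k)), n i)
            + ((⟨x, hx'⟩ : Fin (n ⟨j', hjk⟩)) : ℕ),
            by have := offset_lt_sum n ⟨j', hjk⟩ x hx'; simp only [Fin.val_mk]; omega⟩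
              : Fin (3 * m + ∑ j, n j)) = t := by
          apply Fin.ext
          show 3 * m + (∑ i ∈ Finset.univ.filter (fun i : Fin k => i < (⟨j', hjk⟩ : Fin k)), n i)
              + x = (t : ℕ)
          rw [filter_sum_eq]
          have hv : ((⟨j', hjk⟩ : Fin k) : ℕ) = j' := rfl
          rw [hv]
          have := t.2
          omega
        simpa [pj, LinearMap.funLeft_apply, hidx] using this
  omega
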